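/- (Unravelling.) Let Q ∈ ℝ^{n×n} be symmetric, let s₁,…,s_q ∈ ℝⁿ satisfy sᵢᵀQsⱼ = 0 for i ≠ j and sᵢᵀQsᵢ ≠ 0 for each i, and let S := [s₁,…,s_q] ∈ ℝ^{n×q} be their horizontal concatenation (so SᵀQS is an invertible diagonal matrix). Let G ∈ ℝ^{n×n} be symmetric. Define G¹ := G and, for i = 1,…,q, G^{i+1} := quNac(Gⁱ, sᵢ, Q) where quNac with a single column sᵢ is Q·(sᵢsᵢᵀ/(sᵢᵀQsᵢ))·Q + (I − Q·sᵢsᵢᵀ/(sᵢᵀQsᵢ))·Gⁱ·(I − (sᵢsᵢᵀ/(sᵢᵀQsᵢ))·Q). Then the result of these q sequential rank-2 updates equals the single block update: G^{q+1} = quNac(G, S, Q) = Q·P(S,Q)·Q + (I − Q·P(S,Q))·G·(I − P(S,Q)·Q). -/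

import Mathlib

open Matrix

/-- The projection-type matrix `P(S,Q) := S (Sᵀ Q S)⁻¹ Sᵀ`. -/
noncomputable def projMat {n q : ℕ} (S : Matrix (Fin n) (Fin q) ℝ)
    (Q : Matrix (Fin n) (Fin n) ℝ) : Matrix (Fin n) (Fin n) ℝ :=
  S * (Sᵀ * Q * S)⁻¹ * Sᵀ

/-- The rank-2 quNac update built from a single column `s`. -/
noncomputable def quNac1 {n : ℕ} (G : Matrix (Fin n) (Fin n) ℝ) (s : Fin n → ℝ)
    (Q : Matrix (Fin n) (Fin n) ℝ) : Matrix (Fin n) (Fin n) ℝ :=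
  Q * ((s ⬝ᵥ (Q *ᵥ s))⁻¹ • vecMulVec s s) * Q +
    (1 - Q * ((s ⬝ᵥ (Q *ᵥ s))⁻¹ • vecMulVec s s)) * G *
      (1 - ((s ⬝ᵥ (Q *ᵥ s))⁻¹ • vecMulVec s s) * Q)

lemma vmv_mul {n : ℕ} (u v : Fin n → ℝ) (A : Matrix (Fin n) (Fin n) ℝ) :
    vecMulVec u v * A = vecMulVec u (v ᵥ* A) := by
  ext r c
  simp [Matrix.mul_apply, vecMulVec_apply, vecMul, dotProduct, Finset.mul_sum, mul_assoc]

lemma vmv_mul_vmv {n : ℕ} (a b c d : Fin n → ℝ) :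
    vecMulVec a b * vecMulVec c d = (b ⬝ᵥ c) • vecMulVec a d := by
  ext r e
  simp only [Matrix.mul_apply, vecMulVec_apply, Matrix.smul_apply, dotProduct,
    Finset.sum_mul, Finset.mul_sum, smul_eq_mul]
  rw [Finset.sum_congr rfl]
  intro i _
  ring

lemma vmv_mid {n : ℕ} (a b c e : Fin n → ℝ) (Q : Matrix (Fin n) (Fin n) ℝ) :
    vecMulVec a b * Q * vecMulVec c e = (b ⬝ᵥ (Q *ᵥ c)) • vecMulVec a e := by
  rw [vmv_mul, vmv_mul_vmv, ← dotProduct_mulVec]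

lemma entry_eq {n : ℕ} (Q : Matrix (Fin n) (Fin n) ℝ) (u v : Fin n → ℝ) :
    ∑ c, (∑ r, u r * Q r c) * v c = u ⬝ᵥ (Q *ᵥ v) := by
  calc ∑ c, (∑ r, u r * Q r c) * v c
      = ∑ c, ∑ r, u r * Q r c * v c := by
        exact Finset.sum_congr rfl fun c _ => Finset.sum_mul _ _ _
    _ = ∑ r, ∑ c, u r * Q r c * v c := Finset.sum_comm
    _ = u ⬝ᵥ (Q *ᵥ v) := by
        simp only [dotProduct, mulVec, Finset.mul_sum]
        exact Finset.sum_congr rfl fun r _ => Finset.sum_congr rfl fun c _ => by ring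

/-- The algebraic unravelling step. -/
lemma step {n : ℕ} (Q Pi Pk G₀ : Matrix (Fin n) (Fin n) ℝ)
    (h1 : Pi * Q * Pk = 0) (h2 : Pk * Q * Pi = 0) (h3 : Pk * Q * Pk = Pk) :
    Q * Pk * Q + (1 - Q * Pk) * (Q * Pi * Q + (1 - Q * Pi) * G₀ * (1 - Pi * Q)) *
        (1 - Pk * Q) =
      Q * (Pi + Pk) * Q + (1 - Q * (Pi + Pk)) * G₀ * (1 - (Pi + Pk) * Q) := by
  have a : (1 - Q * Pk) * (Q * Pi * Q) * (1 - Pk * Q) = Q * Pi * Q := by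
    calc (1 - Q * Pk) * (Q * Pi * Q) * (1 - Pk * Q)
        = Q * Pi * Q - Q * (Pk * Q * Pi) * Q - Q * (Pi * Q * Pk) * Q
            + Q * (Pk * Q * Pi) * Q * (Pk * Q) := by noncomm_ring
      _ = Q * Pi * Q := by rw [h1, h2]; noncomm_ring
  have b : (1 - Q * Pk) * (1 - Q * Pi) = 1 - Q * (Pi + Pk) := by
    calc (1 - Q * Pk) * (1 - Q * Pi)
        = 1 - Q * Pi - Q * Pk + Q * (Pk * Q * Pi) := by noncomm_ring
      _ = 1 - Q * (Pi + Pk) := by rw [h2]; noncomm_ring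
  have c : (1 - Pi * Q) * (1 - Pk * Q) = 1 - (Pi + Pk) * Q := by
    calc (1 - Pi * Q) * (1 - Pk * Q)
        = 1 - Pi * Q - Pk * Q + (Pi * Q * Pk) * Q := by noncomm_ring
      _ = 1 - (Pi + Pk) * Q := by rw [h1]; noncomm_ring
  calc Q * Pk * Q + (1 - Q * Pk) * (Q * Pi * Q + (1 - Q * Pi) * G₀ * (1 - Pi * Q)) *
        (1 - Pk * Q)
      = Q * Pk * Q + (1 - Q * Pk) * (Q * Pi * Q) * (1 - Pk * Q)
          + ((1 - Q * Pk) * (1 - Q * Pi)) * G₀ * ((1 - Pi * Q) * (1 - Pk * Q)) := by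
        noncomm_ring
    _ = Q * Pk * Q + Q * Pi * Q + (1 - Q * (Pi + Pk)) * G₀ * (1 - (Pi + Pk) * Q) := by
        rw [a, b, c]
    _ = _ := by noncomm_ring

/-- Unravelling: if `s₁,…,s_q` are mutually `Q`-orthogonal with nonzero `Q`-curvature,
then `q` sequential single-column quNac updates equal the block quNac update. -/
theorem stmt10 {n q : ℕ} (Q : Matrix (Fin n) (Fin n) ℝ) (hQ : Q.IsSymm)
    (s : Fin q → (Fin n → ℝ))
    (horth : ∀ i j : Fin q, i ≠ j → s i ⬝ᵥ (Q *ᵥ s j) = 0)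
    (hcurv : ∀ i : Fin q, s i ⬝ᵥ (Q *ᵥ s i) ≠ 0)
    (G₀ : Matrix (Fin n) (Fin n) ℝ) (hG₀ : G₀.IsSymm)
    (G : ℕ → Matrix (Fin n) (Fin n) ℝ)
    (hG0 : G 0 = G₀)
    (hrec : ∀ i : Fin q, G (i + 1 : ℕ) = quNac1 (G i) (s i) Q) :
    G q = Q * projMat (Matrix.of fun r j => s j r) Q * Q +
      (1 - Q * projMat (Matrix.of fun r j => s j r) Q) * G₀ *
        (1 - projMat (Matrix.of fun r j => s j r) Q * Q) := by
  set d : Fin q → ℝ := fun i => s i ⬝ᵥ (Q *ᵥ s i) with hd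
  set P : Fin q → Matrix (Fin n) (Fin n) ℝ :=
    fun i => (d i)⁻¹ • vecMulVec (s i) (s i) with hP
  -- key product rule
  have hPQP : ∀ i j : Fin q, P i * Q * P j = if i = j then P i else 0 := by
    intro i j
    have : P i * Q * P j
        = ((d i)⁻¹ * ((d j)⁻¹ * (s i ⬝ᵥ (Q *ᵥ s j)))) • vecMulVec (s i) (s j) := by
      rw [hP]
      simp only [Matrix.smul_mul, Matrix.mul_smul, vmv_mid, smul_smul]
      ring_nf
    rw [this]
    by_cases h : i = j
    · subst h
      simp only [if_pos rfl]
      rw [hP]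
      congr 1
      have := hcurv i
      field_simp
      show d i / d i ^ 2 = 1 / d i
      have hdi : d i ≠ 0 := this
      rw [div_eq_div_iff (pow_ne_zero 2 hdi) hdi]
      ring
    · rw [if_neg h, horth i j h]
      simp
  -- partial sums of projectors
  set Pi : ℕ → Matrix (Fin n) (Fin n) ℝ :=
    fun k => ∑ i ∈ Finset.univ.filter (fun i : Fin q => (i : ℕ) < k), P i with hPi
  have hPi0 : Pi 0 = 0 := by simp [hPi]
  have hPisucc : ∀ k (hk : k < q),
      Pi (k + 1) = P ⟨k, hk⟩ + Pi k := by
    intro k hk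
    have hset : Finset.univ.filter (fun i : Fin q => (i : ℕ) < k + 1)
        = insert ⟨k, hk⟩ (Finset.univ.filter (fun i : Fin q => (i : ℕ) < k)) := by
      ext i
      simp only [Finset.mem_filter, Finset.mem_univ, true_and, Finset.mem_insert]
      constructor
      · intro h
        rcases Nat.lt_succ_iff_lt_or_eq.mp h with h | h
        · exact Or.inr h
        · exact Or.inl (Fin.ext h)
      · rintro (h | h)
        · subst h; exact Nat.lt_succ_self k
        · exact Nat.lt_succ_of_lt h
    have hnot : (⟨k, hk⟩ : Fin q) ∉
        Finset.univ.filter (fun i : Fin q => (i : ℕ) < k) := by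
      simp
    rw [hPi]
    simp only
    rw [hset, Finset.sum_insert hnot]
  have hPiQP : ∀ k (hk : k < q), Pi k * Q * P ⟨k, hk⟩ = 0 := by
    intro k hk
    rw [hPi]
    simp only [Finset.sum_mul]
    apply Finset.sum_eq_zero
    intro i hi
    simp only [Finset.mem_filter, Finset.mem_univ, true_and] at hi
    have hne : i ≠ ⟨k, hk⟩ := by
      intro h; subst h; exact lt_irrefl _ hi
    rw [hPQP, if_neg hne]
  have hPQPi : ∀ k (hk : k < q), P ⟨k, hk⟩ * Q * Pi k = 0 := by
    intro k hk
    rw [hPi]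
    simp only [Finset.mul_sum]
    apply Finset.sum_eq_zero
    intro i hi
    simp only [Finset.mem_filter, Finset.mem_univ, true_and] at hi
    have hne : (⟨k, hk⟩ : Fin q) ≠ i := by
      intro h; rw [← h] at hi; exact lt_irrefl _ hi
    rw [hPQP, if_neg hne]
  -- main induction
  have main : ∀ k, k ≤ q →
      G k = Q * Pi k * Q + (1 - Q * Pi k) * G₀ * (1 - Pi k * Q) := by
    intro k
    induction k with
    | zero => intro _; simp [hPi0, hG0]
    | succ k ih =>
      intro hk1
      have hk : k < q := hk1
      have hGk := ih (le_of_lt hk)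
      have hj : ((⟨k, hk⟩ : Fin q) : ℕ) = k := rfl
      have hq1 : G (k + 1) = quNac1 (G k) (s ⟨k, hk⟩) Q := by
        have := hrec ⟨k, hk⟩
        rwa [hj] at this
      rw [hq1, hGk]
      have hdef : quNac1 (Q * Pi k * Q + (1 - Q * Pi k) * G₀ * (1 - Pi k * Q))
            (s ⟨k, hk⟩) Q
          = Q * P ⟨k, hk⟩ * Q +
            (1 - Q * P ⟨k, hk⟩) *
              (Q * Pi k * Q + (1 - Q * Pi k) * G₀ * (1 - Pi k * Q)) *
            (1 - P ⟨k, hk⟩ * Q) := rfl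
      rw [hdef, hPisucc k hk]
      have h3 : P ⟨k, hk⟩ * Q * P ⟨k, hk⟩ = P ⟨k, hk⟩ := by
        rw [hPQP, if_pos rfl]
      have := step Q (Pi k) (P ⟨k, hk⟩) G₀ (hPiQP k hk) (hPQPi k hk) h3
      rw [this]
      rw [add_comm (Pi k) (P ⟨k, hk⟩)]
  -- identify projMat with the full sum
  have hproj : projMat (Matrix.of fun r j => s j r) Q = Pi q := by
    set S : Matrix (Fin n) (Fin q) ℝ := Matrix.of fun r j => s j r with hS
    have hdiag : Sᵀ * Q * S = Matrix.diagonal d := by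
      ext i j
      simp only [Matrix.mul_apply, Matrix.transpose_apply, hS, Matrix.of_apply,
        Matrix.diagonal_apply]
      rw [entry_eq]
      by_cases h : i = j
      · subst h; rw [if_pos rfl, hd]
      · rw [if_neg h, horth i j h]
    have hone : Matrix.diagonal d * Matrix.diagonal (fun i => (d i)⁻¹) = 1 := by
      have hfun : (fun i => d i * (d i)⁻¹) = (1 : Fin q → ℝ) :=
        funext fun i => mul_inv_cancel₀ (hcurv i)
      rw [Matrix.diagonal_mul_diagonal, hfun]
      exact Matrix.diagonal_one
    have hinv : (Sᵀ * Q * S)⁻¹ = Matrix.diagonal (fun i => (d i)⁻¹) := by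
      rw [hdiag]
      exact Matrix.inv_eq_right_inv hone
    have hPiq : Pi q = ∑ i : Fin q, P i := by
      rw [hPi]
      simp only
      congr 1
      ext i
      simp [i.isLt]
    rw [projMat, hinv, hPiq]
    ext r c
    rw [Matrix.mul_apply]
    simp only [Matrix.mul_diagonal, Matrix.transpose_apply, hS, Matrix.of_apply,
      Matrix.sum_apply, Matrix.smul_apply, vecMulVec_apply, smul_eq_mul, hP]
    exact Finset.sum_congr rfl fun j _ => by ring
  rw [hproj]
  exact main q le_rfl
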